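/- If A, B > 0, k ∈ ℕ, and there exist nonnegative reals x₁,…,x_k with x₁³+⋯+x_k³ = A³ and x₁⁵+⋯+x_k⁵ = B⁵, then (1/k)^(2/15) ≤ B/A ≤ 1. -/

import Mathlib

theorem power_sum_ratio_bounds (A B : ℝ) (k : ℕ) (hA : 0 < A) (hB : 0 < B)
    (hk : 0 < k) (x : Fin k → ℝ) (hx : ∀ i, 0 ≤ x i)
    (h3 : ∑ i, x i ^ 3 = A ^ 3) (h5 : ∑ i, x i ^ 5 = B ^ 5) :
    ((1 : ℝ) / k) ^ ((2 : ℝ) / 15) ≤ B / A ∧ B / A ≤ 1 := by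
  have hk0 : (0:ℝ) < (k:ℝ) := by exact_mod_cast hk
  -- each x i ≤ A
  have hxA : ∀ i, x i ≤ A := by
    intro i
    have h1 : x i ^ 3 ≤ A ^ 3 := by
      rw [← h3]
      exact Finset.single_le_sum (f := fun j => x j ^ 3)
        (fun j _ => pow_nonneg (hx j) 3) (Finset.mem_univ i)
    exact (pow_le_pow_iff_left₀ (hx i) hA.le (by norm_num)).mp h1
  -- Upper bound
  have hBA : B ≤ A := by
    have h1 : B ^ 5 ≤ A ^ 5 := by
      rw [← h5]
      calc ∑ i, x i ^ 5 ≤ ∑ i, x i ^ 3 * A ^ 2 := by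
            apply Finset.sum_le_sum
            intro i _
            have : x i ^ 5 = x i ^ 3 * x i ^ 2 := by ring
            rw [this]
            have := pow_le_pow_left₀ (hx i) (hxA i) 2
            nlinarith [pow_nonneg (hx i) 3]
        _ = A ^ 3 * A ^ 2 := by rw [← Finset.sum_mul, h3]
        _ = A ^ 5 := by ring
    exact (pow_le_pow_iff_left₀ hB.le hA.le (by norm_num)).mp h1
  refine ⟨?_, (div_le_one hA).mpr hBA⟩
  -- Lower bound via Hölder
  have hconj : Real.HolderConjugate (5/3) (5/2) := ⟨by norm_num, by norm_num, by norm_num⟩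
  have holder := Real.inner_le_Lp_mul_Lq_of_nonneg (s := Finset.univ)
    (f := fun i => x i ^ 3) (g := fun _ => (1:ℝ)) hconj
    (fun i _ => pow_nonneg (hx i) 3) (fun i _ => zero_le_one)
  simp only [mul_one, Real.one_rpow] at holder
  have hrw : ∀ i, (x i ^ 3 : ℝ) ^ ((5:ℝ)/3) = x i ^ 5 := by
    intro i
    rw [← Real.rpow_natCast (x i) 3, ← Real.rpow_mul (hx i)]
    norm_num
  rw [Finset.sum_congr rfl (fun i _ => hrw i), h3, h5, Finset.sum_const,
    Finset.card_univ, Fintype.card_fin, nsmul_eq_mul, mul_one] at holder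
  -- holder : A ^ 3 ≤ (B ^ 5) ^ (1/(5/3)) * (k:ℝ) ^ (1/(5/2))
  have hB53 : (B ^ 5 : ℝ) ^ ((1:ℝ)/(5/3)) = B ^ 3 := by
    rw [← Real.rpow_natCast B 5, ← Real.rpow_mul hB.le]
    norm_num
  have hK : ((k:ℝ) ^ ((2:ℝ)/15)) ^ (3:ℕ) = (k:ℝ) ^ ((1:ℝ)/(5/2)) := by
    rw [← Real.rpow_natCast ((k:ℝ) ^ ((2:ℝ)/15)) 3, ← Real.rpow_mul hk0.le]
    norm_num
  have hkpos : (0:ℝ) < (k:ℝ) ^ ((2:ℝ)/15) := Real.rpow_pos_of_pos hk0 _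
  have key : A ≤ B * (k:ℝ) ^ ((2:ℝ)/15) := by
    have h1 : A ^ 3 ≤ (B * (k:ℝ) ^ ((2:ℝ)/15)) ^ 3 := by
      rw [mul_pow, hK]
      calc A ^ 3 ≤ (B ^ 5 : ℝ) ^ ((1:ℝ)/(5/3)) * (k:ℝ) ^ ((1:ℝ)/(5/2)) := holder
        _ = B ^ 3 * (k:ℝ) ^ ((1:ℝ)/(5/2)) := by rw [hB53]
    exact (pow_le_pow_iff_left₀ hA.le (by positivity) (by norm_num)).mp h1
  rw [le_div_iff₀ hA, Real.div_rpow zero_le_one hk0.le, Real.one_rpow,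
    div_mul_eq_mul_div, one_mul, div_le_iff₀ hkpos]
  linarith [key]
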